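/- Let A = 𝔽₂[x,y]/(x² + xy + y², x²y + xy²) (truncated further so that A vanishes in degrees ≥ 4; equivalently work in A ⊗ A and record that elements of total bidegree with either factor of degree ≥ 4 vanish). In A ⊗_{𝔽₂} A, set τ(z) = z⊗1 + 1⊗z, v₁ = τ(x)²(1⊗y) + τ(x)τ(y)(x⊗1), and v₃ = τ(x)²(y⊗1) + τ(y)²(x⊗1). Then v₁ · v₃ = x²y ⊗ xy² ≠ 0, assuming all terms of the product with a tensor factor of degree ≥ 4 are set to zero. -/

import Mathlib

set_option maxHeartbeats 4000000
set_option synthInstance.maxHeartbeats 400000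


open MvPolynomial TensorProduct

/-- `A = 𝔽₂[x,y]/(x² + xy + y², x²y + xy²)` further truncated so that all
elements of degree `≥ 4` vanish (we kill all degree-4 monomials). -/
noncomputable abbrev A15 : Type :=
  MvPolynomial Bool (ZMod 2) ⧸
    Ideal.span ({X false ^ 2 + X false * X true + X true ^ 2,
                 X false ^ 2 * X true + X false * X true ^ 2,
                 X false ^ 4, X false ^ 3 * X true, X false ^ 2 * X true ^ 2,
                 X false * X true ^ 3, X true ^ 4} :
      Set (MvPolynomial Bool (ZMod 2)))

noncomputable def x15 : A15 := Ideal.Quotient.mk _ (X false)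
noncomputable def y15 : A15 := Ideal.Quotient.mk _ (X true)

/-- `τ(z) = z ⊗ 1 + 1 ⊗ z` in `A ⊗[𝔽₂] A`. -/
noncomputable def τ15 (z : A15) : A15 ⊗[ZMod 2] A15 := z ⊗ₜ 1 + 1 ⊗ₜ z

noncomputable def v1 : A15 ⊗[ZMod 2] A15 :=
  τ15 x15 ^ 2 * ((1 : A15) ⊗ₜ y15) + τ15 x15 * τ15 y15 * (x15 ⊗ₜ (1 : A15))

noncomputable def v3 : A15 ⊗[ZMod 2] A15 :=
  τ15 x15 ^ 2 * (y15 ⊗ₜ (1 : A15)) + τ15 y15 ^ 2 * (x15 ⊗ₜ (1 : A15))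

/-! ### Auxiliary material -/

namespace Stmt15Aux

abbrev P : Type := MvPolynomial Bool (ZMod 2)

noncomputable abbrev S : Set P :=
  {X false ^ 2 + X false * X true + X true ^ 2,
   X false ^ 2 * X true + X false * X true ^ 2,
   X false ^ 4, X false ^ 3 * X true, X false ^ 2 * X true ^ 2,
   X false * X true ^ 3, X true ^ 4}

noncomputable abbrev I : Ideal P := Ideal.span S

/-- exponent of x²y -/
noncomputable def m21 : Bool →₀ ℕ := Finsupp.single false 2 + Finsupp.single true 1
/-- exponent of xy² -/
noncomputable def m12 : Bool →₀ ℕ := Finsupp.single false 1 + Finsupp.single true 2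

/-- The separating functional on polynomials. -/
noncomputable def φ : P →ₗ[ZMod 2] ZMod 2 := lcoeff (ZMod 2) m21 + lcoeff (ZMod 2) m12

lemma φ_apply (p : P) : φ p = coeff m21 p + coeff m12 p := rfl

lemma ble (f g : Bool →₀ ℕ) : f ≤ g ↔ f false ≤ g false ∧ f true ≤ g true := by
  rw [Finsupp.le_def]
  exact ⟨fun h => ⟨h false, h true⟩, fun ⟨h1, h2⟩ a => by cases a <;> assumption⟩

lemma zmod2_add_self (a : ZMod 2) : a + a = 0 := by
  revert a; decide

lemma htwo : (2 : ZMod 2) = 0 := by decide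

lemma mXY : (X false * X true : P)
    = monomial (Finsupp.single false 1 + Finsupp.single true 1) 1 := by
  rw [X, X, monomial_mul, one_mul]

lemma φ_r_mono0 (r : P) (s : Bool →₀ ℕ) (h21 : ¬ s ≤ m21) (h12 : ¬ s ≤ m12) :
    φ (r * monomial s 1) = 0 := by
  rw [φ_apply, coeff_mul_monomial', coeff_mul_monomial', if_neg h21, if_neg h12, add_zero]

lemma φ_r_x2 (r : P) :
    φ (r * monomial (Finsupp.single false 2) 1) = coeff (Finsupp.single true 1) r := by
  rw [φ_apply]
  have h1 : m21 = Finsupp.single true 1 + Finsupp.single false 2 := by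
    unfold m21; rw [add_comm]
  have h2 : coeff m12 (r * monomial (Finsupp.single false 2) 1) = 0 := by
    rw [coeff_mul_monomial', if_neg]
    simp [Finsupp.single_le_iff, m12, Finsupp.add_apply, Finsupp.single_apply]
  rw [h1, coeff_mul_monomial, mul_one, h2, add_zero]

lemma φ_r_y2 (r : P) :
    φ (r * monomial (Finsupp.single true 2) 1) = coeff (Finsupp.single false 1) r := by
  rw [φ_apply]
  have h1 : m12 = Finsupp.single false 1 + Finsupp.single true 2 := rfl
  have h2 : coeff m21 (r * monomial (Finsupp.single true 2) 1) = 0 := by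
    rw [coeff_mul_monomial', if_neg]
    simp [Finsupp.single_le_iff, m21, Finsupp.add_apply, Finsupp.single_apply]
  rw [h1, coeff_mul_monomial, mul_one, h2, zero_add]

lemma φ_r_xy (r : P) :
    φ (r * monomial (Finsupp.single false 1 + Finsupp.single true 1) 1)
      = coeff (Finsupp.single false 1) r + coeff (Finsupp.single true 1) r := by
  rw [φ_apply]
  have h1 : m21 = Finsupp.single false 1 + (Finsupp.single false 1 + Finsupp.single true 1) := by
    unfold m21
    rw [show Finsupp.single false 2 = Finsupp.single false 1 + Finsupp.single false 1 by
      rw [← Finsupp.single_add], add_assoc]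
  have h2 : m12 = Finsupp.single true 1 + (Finsupp.single false 1 + Finsupp.single true 1) := by
    unfold m12
    rw [show Finsupp.single true 2 = Finsupp.single true 1 + Finsupp.single true 1 by
      rw [← Finsupp.single_add], add_left_comm]
  rw [h1, coeff_mul_monomial, mul_one, h2, coeff_mul_monomial, mul_one]

lemma φ_r_m21 (r : P) : φ (r * monomial m21 1) = coeff 0 r := by
  rw [φ_apply]
  have h2 : coeff m12 (r * monomial m21 1) = 0 := by
    rw [coeff_mul_monomial', if_neg]
    simp [ble, m21, m12, Finsupp.add_apply, Finsupp.single_apply]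
  rw [h2, add_zero, coeff_mul_monomial', if_pos le_rfl, tsub_self, mul_one]

lemma φ_r_m12 (r : P) : φ (r * monomial m12 1) = coeff 0 r := by
  rw [φ_apply]
  have h2 : coeff m21 (r * monomial m12 1) = 0 := by
    rw [coeff_mul_monomial', if_neg]
    simp [ble, m21, m12, Finsupp.add_apply, Finsupp.single_apply]
  rw [h2, zero_add, coeff_mul_monomial', if_pos le_rfl, tsub_self, mul_one]

lemma m21_ne_m12 : m21 ≠ m12 := by
  intro h
  have := congrFun (congrArg (fun f : Bool →₀ ℕ => (f : Bool → ℕ)) h) false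
  simp [m12, m21] at this

lemma hx2y_mono : (X false ^ 2 * X true : P) = monomial m21 1 := by
  simp only [X, monomial_pow, monomial_mul, m21, one_pow, one_mul, Finsupp.smul_single,
    smul_eq_mul, mul_one]

lemma hxy2_mono : (X false * X true ^ 2 : P) = monomial m12 1 := by
  simp only [X, monomial_pow, monomial_mul, m12, one_pow, one_mul, mul_one, Finsupp.smul_single,
    smul_eq_mul]

lemma φ_mul_mem : ∀ g ∈ S, ∀ r : P, φ (r * g) = 0 := by
  intro g hg r
  simp only [S, Set.mem_insert_iff, Set.mem_singleton_iff] at hg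
  rcases hg with rfl | rfl | rfl | rfl | rfl | rfl | rfl
  · rw [X_pow_eq_monomial, X_pow_eq_monomial, mXY, mul_add, mul_add, map_add, map_add,
      φ_r_x2, φ_r_xy, φ_r_y2]
    linear_combination (coeff (Finsupp.single false 1) r
      + coeff (Finsupp.single true 1) r) * htwo
  · rw [hx2y_mono, hxy2_mono, mul_add, map_add, φ_r_m21, φ_r_m12]
    exact zmod2_add_self _
  · rw [X_pow_eq_monomial, φ_r_mono0] <;>
      simp [ble, m21, m12, Finsupp.add_apply, Finsupp.single_apply]
  · rw [show (X false ^ 3 * X true : P)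
        = monomial (Finsupp.single false 3 + Finsupp.single true 1) 1 by
          rw [X_pow_eq_monomial, X, monomial_mul, one_mul], φ_r_mono0] <;>
      simp [ble, m21, m12, Finsupp.add_apply, Finsupp.single_apply]
  · rw [show (X false ^ 2 * X true ^ 2 : P)
        = monomial (Finsupp.single false 2 + Finsupp.single true 2) 1 by
          rw [X_pow_eq_monomial, X_pow_eq_monomial, monomial_mul, one_mul], φ_r_mono0] <;>
      simp [ble, m21, m12, Finsupp.add_apply, Finsupp.single_apply]
  · rw [show (X false * X true ^ 3 : P)
        = monomial (Finsupp.single false 1 + Finsupp.single true 3) 1 by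
          rw [X_pow_eq_monomial, X, monomial_mul, one_mul], φ_r_mono0] <;>
      simp [ble, m21, m12, Finsupp.add_apply, Finsupp.single_apply]
  · rw [X_pow_eq_monomial, φ_r_mono0] <;>
      simp [ble, m21, m12, Finsupp.add_apply, Finsupp.single_apply]

lemma φ_vanish : ∀ q ∈ I, φ q = 0 := by
  have H : ∀ q ∈ I, ∀ r : P, φ (r * q) = 0 := by
    intro q hq
    refine Submodule.span_induction (fun g hg => φ_mul_mem g hg) (by simp) ?_ ?_ hq
    · intro a b _ _ ha hb r
      rw [mul_add, map_add, ha, hb, add_zero]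
    · intro a b _ hb r
      have : r * (a • b) = (r * a) * b := by rw [smul_eq_mul]; ring
      rw [this, hb]
  intro q hq
  simpa using H q hq 1

/-- The separating functional on `A15`. -/
noncomputable def f : A15 →ₗ[ZMod 2] ZMod 2 :=
  (Submodule.liftQ (I.restrictScalars (ZMod 2)) φ
      (fun q hq => φ_vanish q hq)) ∘ₗ
    (Submodule.Quotient.restrictScalarsEquiv (ZMod 2) (I : Submodule P P)).symm.toLinearMap

lemma f_mk (p : P) : f (Ideal.Quotient.mk I p) = φ p := by
  rfl

lemma φ_x2y : φ (X false ^ 2 * X true : P) = 1 := by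
  rw [φ_apply, hx2y_mono, coeff_monomial, coeff_monomial, if_pos rfl, if_neg m21_ne_m12,
    add_zero]

lemma φ_xy2 : φ (X false * X true ^ 2 : P) = 1 := by
  rw [φ_apply, hxy2_mono, coeff_monomial, coeff_monomial, if_pos rfl,
    if_neg (Ne.symm m21_ne_m12), zero_add]

lemma f_x2y : f (x15 ^ 2 * y15) = 1 := by
  have : x15 ^ 2 * y15 = Ideal.Quotient.mk I (X false ^ 2 * X true) := by
    simp [x15, y15]
  rw [this, f_mk, φ_x2y]

lemma f_xy2 : f (x15 * y15 ^ 2) = 1 := by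
  have : x15 * y15 ^ 2 = Ideal.Quotient.mk I (X false * X true ^ 2) := by
    simp [x15, y15]
  rw [this, f_mk, φ_xy2]

/-- inclusion of the left factor -/
noncomputable def iL : A15 →ₐ[ZMod 2] A15 ⊗[ZMod 2] A15 := Algebra.TensorProduct.includeLeft
/-- inclusion of the right factor -/
noncomputable def iR : A15 →ₐ[ZMod 2] A15 ⊗[ZMod 2] A15 := Algebra.TensorProduct.includeRight

lemma rel_mk (g : P) (hg : g ∈ S) : (Ideal.Quotient.mk I g : A15) = 0 :=
  Ideal.Quotient.eq_zero_iff_mem.mpr (Ideal.subset_span hg)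

lemma rel1 : x15 ^ 2 + x15 * y15 + y15 ^ 2 = 0 := by
  have := rel_mk _ (by left; rfl)
  simpa [x15, y15] using this

lemma rel2 : x15 ^ 2 * y15 + x15 * y15 ^ 2 = 0 := by
  have := rel_mk (X false ^ 2 * X true + X false * X true ^ 2) (by right; left; rfl)
  simpa [x15, y15] using this

lemma rel6 : x15 * y15 ^ 3 = 0 := by
  have := rel_mk (X false * X true ^ 3) (by
    right; right; right; right; right; left; rfl)
  simpa [x15, y15] using this

lemma rel7 : y15 ^ 4 = 0 := by
  have := rel_mk (X true ^ 4) (by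
    right; right; right; right; right; right; rfl)
  simpa [x15, y15] using this

lemma rel3 : x15 ^ 4 = 0 := by
  have := rel_mk (X false ^ 4) (by right; right; left; rfl)
  simpa [x15, y15] using this

lemma rel4 : x15 ^ 3 * y15 = 0 := by
  have := rel_mk (X false ^ 3 * X true) (by right; right; right; left; rfl)
  simpa [x15, y15] using this

lemma rel5 : x15 ^ 2 * y15 ^ 2 = 0 := by
  have := rel_mk (X false ^ 2 * X true ^ 2) (by right; right; right; right; left; rfl)
  simpa [x15, y15] using this

lemma two_eq_zero : (2 : A15 ⊗[ZMod 2] A15) = 0 := by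
  calc (2 : A15 ⊗[ZMod 2] A15) = 1 + 1 := one_add_one_eq_two.symm
    _ = (2 : ZMod 2) • (1 : A15 ⊗[ZMod 2] A15) := (two_smul (ZMod 2) _).symm
    _ = (0 : ZMod 2) • (1 : A15 ⊗[ZMod 2] A15) := by rw [show (2 : ZMod 2) = 0 by decide]
    _ = 0 := zero_smul _ _

end Stmt15Aux

open Stmt15Aux in
/-- In `A ⊗[𝔽₂] A` (with `A` the degree-`< 4` truncation of
`𝔽₂[x,y]/(x²+xy+y², x²y+xy²)`, so that all terms with a tensor factor of
degree `≥ 4` vanish), `v₁ · v₃ = x²y ⊗ xy² ≠ 0`. -/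
theorem stmt15 :
    v1 * v3 = (x15 ^ 2 * y15) ⊗ₜ (x15 * y15 ^ 2) ∧ v1 * v3 ≠ 0 := by
  have G0 : (iL x15) ^ 2 + iL x15 * iL y15 + (iL y15) ^ 2 = 0 := by
    have := congrArg iL rel1; simpa only [map_add, map_mul, map_pow, map_zero, ← AlgHom.coe_toRingHom] using this
  have G1 : (iL x15) ^ 2 * iL y15 + iL x15 * (iL y15) ^ 2 = 0 := by
    have := congrArg iL rel2; simpa only [map_add, map_mul, map_pow, map_zero, ← AlgHom.coe_toRingHom] using this
  have G5 : iL x15 * (iL y15) ^ 3 = 0 := by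
    have := congrArg iL rel6; simpa only [map_mul, map_pow, map_zero, ← AlgHom.coe_toRingHom] using this
  have G6 : (iL y15) ^ 4 = 0 := by
    have := congrArg iL rel7; simpa only [map_pow, map_zero, ← AlgHom.coe_toRingHom] using this
  have G7 : (iR x15) ^ 2 + iR x15 * iR y15 + (iR y15) ^ 2 = 0 := by
    have := congrArg iR rel1; simpa only [map_add, map_mul, map_pow, map_zero, ← AlgHom.coe_toRingHom] using this
  have G8 : (iR x15) ^ 2 * iR y15 + iR x15 * (iR y15) ^ 2 = 0 := by
    have := congrArg iR rel2; simpa only [map_add, map_mul, map_pow, map_zero, ← AlgHom.coe_toRingHom] using this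
  have G12 : iR x15 * (iR y15) ^ 3 = 0 := by
    have := congrArg iR rel6; simpa only [map_mul, map_pow, map_zero, ← AlgHom.coe_toRingHom] using this
  have G13 : (iR y15) ^ 4 = 0 := by
    have := congrArg iR rel7; simpa only [map_pow, map_zero, ← AlgHom.coe_toRingHom] using this
  have H2 : (2 : A15 ⊗[ZMod 2] A15) = 0 := two_eq_zero
  have hv1 : v1 = (iL x15 + iR x15) ^ 2 * iR y15
      + (iL x15 + iR x15) * (iL y15 + iR y15) * iL x15 := by
    simp only [v1, τ15, iL, iR, Algebra.TensorProduct.includeLeft_apply,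
      Algebra.TensorProduct.includeRight_apply]
  have hv3 : v3 = (iL x15 + iR x15) ^ 2 * iL y15 + (iL y15 + iR y15) ^ 2 * iL x15 := by
    simp only [v3, τ15, iL, iR, Algebra.TensorProduct.includeLeft_apply,
      Algebra.TensorProduct.includeRight_apply]
  have hrhs : (x15 ^ 2 * y15) ⊗ₜ[ZMod 2] (x15 * y15 ^ 2)
      = (iL x15) ^ 2 * iL y15 * (iR x15 * (iR y15) ^ 2) := by
    simp only [iL, iR, Algebra.TensorProduct.includeLeft_apply,
      Algebra.TensorProduct.includeRight_apply, Algebra.TensorProduct.tmul_pow,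
      Algebra.TensorProduct.tmul_mul_tmul, one_pow, mul_one, one_mul]
  have G2R : (iR x15) ^ 4 = 0 := by
    have := congrArg iR rel3; simpa only [map_pow, map_zero, ← AlgHom.coe_toRingHom] using this
  have G3L : (iL x15) ^ 3 * iL y15 = 0 := by
    have := congrArg iL rel4; simpa only [map_mul, map_pow, map_zero, ← AlgHom.coe_toRingHom] using this
  have G4L : (iL x15) ^ 2 * (iL y15) ^ 2 = 0 := by
    have := congrArg iL rel5; simpa only [map_mul, map_pow, map_zero, ← AlgHom.coe_toRingHom] using this
  have key : v1 * v3 = (x15 ^ 2 * y15) ⊗ₜ[ZMod 2] (x15 * y15 ^ 2) := by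
    rw [hv1, hv3, hrhs]
    generalize iL x15 = XL at G0 G1 G5 G6 G3L G4L ⊢
    generalize iL y15 = YL at G0 G1 G5 G6 G3L G4L ⊢
    generalize iR x15 = XR at G7 G8 G12 G13 G2R ⊢
    generalize iR y15 = YR at G7 G8 G12 G13 G2R ⊢
    have hv1' : (XL + XR) ^ 2 * YR + (XL + XR) * (YL + YR) * XL
        = XL^2*YL + XL*XR*YL + XL*XR*YR + XR^2*YR := by
      linear_combination (XL^2*YR + XL*XR*YR) * H2
    have hv3' : (XL + XR) ^ 2 * YL + (YL + YR) ^ 2 * XL = YL*XR^2 + XL*YR^2 := by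
      linear_combination G1 + (XL*XR*YL + XL*YL*YR) * H2
    rw [hv1', hv3']
    linear_combination XR^2 * G4L + YR^2 * G3L + (XL*YL^2 + XL*YL*YR) * (XR * G7 - G8)
      + (XL^2*XR + XL*XR^2) * (YR * G7 - G8) + YL*YR * G2R
  refine ⟨key, ?_⟩
  intro h0
  have hF : (TensorProduct.lid (ZMod 2) (ZMod 2)).toLinearMap.comp
      (TensorProduct.map f f) (v1 * v3) = 1 := by
    rw [key]
    simp only [LinearMap.comp_apply, TensorProduct.map_tmul, f_x2y, f_xy2,
      LinearEquiv.coe_toLinearMap, TensorProduct.lid_tmul, smul_eq_mul, one_mul]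
  rw [h0, map_zero] at hF
  exact one_ne_zero hF.symm
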